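/- For every Λ > 0 there exists σ♯ ≥ σ* such that for all σ > σ♯, the hazard rate satisfies -∂_σ ln(1 - H(σ,Λ)) > 1/4, and consequently for all σ > σ♯, (1 - H(σ,Λ))/(1 - H(σ♯,Λ)) ≤ exp(-(σ - σ♯)/4). -/

import Mathlib

open Real MeasureTheory Set Filter Topology

noncomputable def fph (σ x : ℝ) : ℝ :=
  x * Real.exp (-(x - σ)^2 / (2*σ)) / Real.sqrt (2*Real.pi*σ^3)

noncomputable def erfc (z : ℝ) : ℝ :=
  (2 / Real.sqrt Real.pi) * ∫ t in Set.Ioi z, Real.exp (-t^2)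

noncomputable def fpH (σ x : ℝ) : ℝ :=
  (1/2) * (erfc ((x-σ)/Real.sqrt (2*σ)) + Real.exp (2*x) * erfc ((x+σ)/Real.sqrt (2*σ)))

noncomputable def kap (σ y x : ℝ) : ℝ :=
  Real.exp (-(y - x + σ)^2/(2*σ)) / Real.sqrt (2*Real.pi*σ) * (1 - Real.exp (-(2*x*y)/σ))

noncomputable def Ei (z : ℝ) : ℝ := ∫ t in Set.Ioi z, Real.exp (-t^2)

lemma gauss_integrable : Integrable (fun t : ℝ => Real.exp (-t^2)) := by
  have := integrable_exp_neg_mul_sq (b := 1) one_pos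
  simpa using this

lemma Ei_nonneg (z : ℝ) : 0 ≤ Ei z :=
  setIntegral_nonneg measurableSet_Ioi (fun t _ => (Real.exp_pos _).le)

lemma Ei_reflect (z : ℝ) : Ei (-z) + Ei z = Real.sqrt Real.pi := by
  have h1 : Ei (-z) = ∫ t in Set.Iic z, Real.exp (-t^2) := by
    have := integral_comp_neg_Ioi (-z) (fun t => Real.exp (-t^2))
    simp only [neg_neg, neg_sq] at this
    rw [Ei, ← this]
  rw [h1, Ei,
    intervalIntegral.integral_Iic_add_Ioi gauss_integrable.integrableOn gauss_integrable.integrableOn]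
  have := integral_gaussian 1
  simpa using this

lemma Ei_hasDerivAt (z : ℝ) : HasDerivAt Ei (-(Real.exp (-z^2))) z := by
  have key : Ei = fun z => (Real.sqrt Real.pi - ∫ t in Set.Iic (0:ℝ), Real.exp (-t^2))
      - ∫ t in (0:ℝ)..z, Real.exp (-t^2) := by
    funext y
    have h2 : ((∫ t in Set.Iic y, Real.exp (-t^2)) - ∫ t in Set.Iic (0:ℝ), Real.exp (-t^2))
        = ∫ t in (0:ℝ)..y, Real.exp (-t^2) :=
      intervalIntegral.integral_Iic_sub_Iic gauss_integrable.integrableOn gauss_integrable.integrableOn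
    have h3 : (∫ t in Set.Iic y, Real.exp (-t^2)) + Ei y = Real.sqrt Real.pi := by
      rw [Ei]
      have := integral_gaussian 1
      rw [intervalIntegral.integral_Iic_add_Ioi gauss_integrable.integrableOn
        gauss_integrable.integrableOn]
      simpa using this
    linarith
  rw [key]
  have hc : Continuous (fun t : ℝ => Real.exp (-t^2)) := by continuity
  have := intervalIntegral.integral_hasDerivAt_right (a := (0:ℝ)) (b := z)
    (gauss_integrable.intervalIntegrable)
    (hc.stronglyMeasurableAtFilter _ _) hc.continuousAt
  have h := this.const_sub (Real.sqrt Real.pi - ∫ t in Set.Iic (0:ℝ), Real.exp (-t^2))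
  simpa using h


-- generic helper: derivative of -(exp(-t^2) * (N t / D t))
lemma tendsto_aux (c : ℝ) (q : ℝ → ℝ) (hq : ∀ᶠ t in atTop, |q t| ≤ c) :
    Tendsto (fun t => -(Real.exp (-t^2) * q t)) atTop (𝓝 0) := by
  apply squeeze_zero_norm' (a := fun t => (Real.exp (-t)) * c)
  · filter_upwards [hq, eventually_ge_atTop (1:ℝ)] with t h1 h2
    have hc : 0 ≤ c := le_trans (abs_nonneg _) h1
    have he : Real.exp (-t^2) ≤ Real.exp (-t) := by
      apply Real.exp_le_exp.mpr; nlinarith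
    calc ‖-(Real.exp (-t^2) * q t)‖ = Real.exp (-t^2) * |q t| := by
          rw [norm_neg, norm_mul, Real.norm_eq_abs, abs_of_pos (Real.exp_pos _), Real.norm_eq_abs]
      _ ≤ Real.exp (-t) * c := by
          exact mul_le_mul he h1 (abs_nonneg _) (Real.exp_pos _).le
  · have := (Real.tendsto_exp_neg_atTop_nhds_zero).mul_const c
    simpa using this

lemma hasDerivAt_fU (x : ℝ) (hx : x ≠ 0) :
    HasDerivAt (fun t => -(Real.exp (-t^2) * ((4*t^4 - 2*t^2 + 3)/(8*t^5))))
      (Real.exp (-x^2) * ((8*x^6 + 15)/(8*x^6))) x := by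
  have hE : HasDerivAt (fun t : ℝ => Real.exp (-t^2)) (Real.exp (-x^2) * -(2*x^1)) x :=
    ((hasDerivAt_pow 2 x).neg).exp
  have hnum : HasDerivAt (fun t : ℝ => 4*t^4 - 2*t^2 + 3)
      (4*(4*x^3) - 2*(2*x^1)) x := by
    simpa using (((hasDerivAt_pow 4 x).const_mul 4).sub ((hasDerivAt_pow 2 x).const_mul 2)).add_const 3
  have hden : HasDerivAt (fun t : ℝ => 8*t^5) (8*(5*x^4)) x := by
    simpa using (hasDerivAt_pow 5 x).const_mul 8
  have hq := hnum.div hden (by positivity)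
  have h := (hE.mul hq).neg
  refine h.congr_deriv ?_; symm
  simp only [Pi.div_apply]
  have h5 : (8:ℝ)*x^5 ≠ 0 := by positivity
  field_simp
  ring

lemma hasDerivAt_fL (x : ℝ) (hx : x ≠ 0) :
    HasDerivAt (fun t => -(Real.exp (-t^2) * ((2*t^2 - 1)/(4*t^3))))
      (Real.exp (-x^2) * ((4*x^4 - 3)/(4*x^4))) x := by
  have hE : HasDerivAt (fun t : ℝ => Real.exp (-t^2)) (Real.exp (-x^2) * -(2*x^1)) x :=
    ((hasDerivAt_pow 2 x).neg).exp
  have hnum : HasDerivAt (fun t : ℝ => 2*t^2 - 1) (2*(2*x^1)) x := by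
    simpa using ((hasDerivAt_pow 2 x).const_mul 2).sub_const 1
  have hden : HasDerivAt (fun t : ℝ => 4*t^3) (4*(3*x^2)) x := by
    simpa using (hasDerivAt_pow 3 x).const_mul 4
  have hq := hnum.div hden (by positivity)
  have h := (hE.mul hq).neg
  refine h.congr_deriv ?_; symm
  simp only [Pi.div_apply]
  field_simp
  ring

lemma Ei_upper (z : ℝ) (hz : 1 ≤ z) :
    Ei z ≤ Real.exp (-z^2) * ((4*z^4 - 2*z^2 + 3)/(8*z^5)) := by
  have hz0 : 0 < z := lt_of_lt_of_le one_pos hz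
  have hderiv : ∀ x ∈ Set.Ici z, HasDerivAt
      (fun t => -(Real.exp (-t^2) * ((4*t^4 - 2*t^2 + 3)/(8*t^5))))
      (Real.exp (-x^2) * ((8*x^6 + 15)/(8*x^6))) x := by
    intro x hx
    exact hasDerivAt_fU x (by simp only [Set.mem_Ici] at hx; exact ne_of_gt (lt_of_lt_of_le hz0 hx))
  have hpos : ∀ x ∈ Set.Ioi z, 0 ≤ Real.exp (-x^2) * ((8*x^6 + 15)/(8*x^6)) := by
    intro x hx
    simp only [Set.mem_Ioi] at hx
    have h0 : 0 < x := lt_trans hz0 hx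
    exact mul_nonneg (Real.exp_pos _).le (div_nonneg (by positivity) (by positivity))
  have htend : Tendsto (fun t => -(Real.exp (-t^2) * ((4*t^4 - 2*t^2 + 3)/(8*t^5))))
      atTop (𝓝 0) := by
    apply tendsto_aux 1
    filter_upwards [eventually_ge_atTop (1:ℝ)] with t ht
    have h0 : (0:ℝ) < t := lt_of_lt_of_le one_pos ht
    rw [abs_of_nonneg (div_nonneg (by nlinarith [sq_nonneg (t^2-1)]) (by positivity))]
    rw [div_le_one (by positivity)]
    nlinarith [pow_pos h0 5, pow_pos h0 3]
  have hint := integral_Ioi_of_hasDerivAt_of_nonneg' hderiv hpos htend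
  have hintg : IntegrableOn (fun x => Real.exp (-x^2) * ((8*x^6 + 15)/(8*x^6))) (Set.Ioi z) :=
    integrableOn_Ioi_deriv_of_nonneg' hderiv hpos htend
  have hmono : Ei z ≤ ∫ x in Set.Ioi z, Real.exp (-x^2) * ((8*x^6 + 15)/(8*x^6)) := by
    apply setIntegral_mono_on gauss_integrable.integrableOn hintg measurableSet_Ioi
    intro x hx
    simp only [Set.mem_Ioi] at hx
    have hx0 : 0 < x := lt_trans hz0 hx
    nth_rewrite 1 [← mul_one (Real.exp (-x^2))]
    apply mul_le_mul_of_nonneg_left _ (Real.exp_pos _).le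
    rw [le_div_iff₀ (by positivity)]
    nlinarith [pow_pos hx0 6]
  rw [hint] at hmono
  calc Ei z ≤ 0 - -(Real.exp (-z^2) * ((4*z^4 - 2*z^2 + 3)/(8*z^5))) := hmono
    _ = _ := by ring

lemma Ei_lower (z : ℝ) (hz : 1 ≤ z) :
    Real.exp (-z^2) * ((2*z^2 - 1)/(4*z^3)) ≤ Ei z := by
  have hz0 : 0 < z := lt_of_lt_of_le one_pos hz
  have hderiv : ∀ x ∈ Set.Ici z, HasDerivAt
      (fun t => -(Real.exp (-t^2) * ((2*t^2 - 1)/(4*t^3))))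
      (Real.exp (-x^2) * ((4*x^4 - 3)/(4*x^4))) x := by
    intro x hx
    exact hasDerivAt_fL x (by simp only [Set.mem_Ici] at hx; exact ne_of_gt (lt_of_lt_of_le hz0 hx))
  have hpos : ∀ x ∈ Set.Ioi z, 0 ≤ Real.exp (-x^2) * ((4*x^4 - 3)/(4*x^4)) := by
    intro x hx
    simp only [Set.mem_Ioi] at hx
    have hx1 : 1 < x := lt_of_le_of_lt hz hx
    have hx0 : 0 < x := lt_trans one_pos hx1
    have h43 : (0:ℝ) ≤ 4*x^4 - 3 := by nlinarith [sq_nonneg (x^2-1), sq_nonneg (x-1), sq_nonneg (x+1)]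
    exact mul_nonneg (Real.exp_pos _).le (div_nonneg h43 (by positivity))
  have htend : Tendsto (fun t => -(Real.exp (-t^2) * ((2*t^2 - 1)/(4*t^3))))
      atTop (𝓝 0) := by
    apply tendsto_aux 1
    filter_upwards [eventually_ge_atTop (1:ℝ)] with t ht
    have h0 : (0:ℝ) < t := lt_of_lt_of_le one_pos ht
    rw [abs_of_nonneg (by rw [le_div_iff₀ (by positivity)]; nlinarith)]
    rw [div_le_one (by positivity)]
    nlinarith [pow_pos h0 3]
  have hint := integral_Ioi_of_hasDerivAt_of_nonneg' hderiv hpos htend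
  have hintg : IntegrableOn (fun x => Real.exp (-x^2) * ((4*x^4 - 3)/(4*x^4))) (Set.Ioi z) :=
    integrableOn_Ioi_deriv_of_nonneg' hderiv hpos htend
  have hmono : (∫ x in Set.Ioi z, Real.exp (-x^2) * ((4*x^4 - 3)/(4*x^4))) ≤ Ei z := by
    apply setIntegral_mono_on hintg gauss_integrable.integrableOn measurableSet_Ioi
    intro x hx
    simp only [Set.mem_Ioi] at hx
    have hx0 : 0 < x := lt_trans hz0 hx
    nth_rewrite 2 [← mul_one (Real.exp (-x^2))]
    apply mul_le_mul_of_nonneg_left _ (Real.exp_pos _).le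
    rw [div_le_one (by positivity)]
    nlinarith
  rw [hint] at hmono
  calc Real.exp (-z^2) * ((2*z^2 - 1)/(4*z^3))
      = 0 - -(Real.exp (-z^2) * ((2*z^2 - 1)/(4*z^3))) := by ring
    _ ≤ Ei z := hmono


lemma erfc_eq (z : ℝ) : erfc z = (2 / Real.sqrt Real.pi) * Ei z := rfl

lemma G_eq (Λ σ : ℝ) (hσ : 0 < σ) :
    1 - fpH σ Λ = (Ei ((σ-Λ)/Real.sqrt (2*σ))
      - Real.exp (2*Λ) * Ei ((σ+Λ)/Real.sqrt (2*σ))) / Real.sqrt Real.pi := by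
  set S := Real.sqrt (2*σ) with hSdef
  have hπ : Real.sqrt Real.pi ≠ 0 := ne_of_gt (Real.sqrt_pos.mpr Real.pi_pos)
  have hrefl := Ei_reflect ((σ-Λ)/S)
  have hneg : (Λ-σ)/S = -((σ-Λ)/S) := by ring
  rw [fpH, erfc_eq, erfc_eq, hneg]
  have h2 : Λ + σ = σ + Λ := by ring
  rw [h2, show Ei (-((σ-Λ)/S)) = Real.sqrt Real.pi - Ei ((σ-Λ)/S) by linarith]
  set EA := Ei ((σ-Λ)/S)
  set EB := Ei ((σ+Λ)/S)
  field_simp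
  ring

lemma G_hasDerivAt (Λ σ : ℝ) (hσ : 0 < σ) :
    HasDerivAt (fun s => 1 - fpH s Λ)
      (-(2*Λ/Real.sqrt Real.pi * Real.exp (-((σ-Λ)/Real.sqrt (2*σ))^2)
        / (2*σ*Real.sqrt (2*σ)))) σ := by
  have hS0 : 0 < Real.sqrt (2*σ) := Real.sqrt_pos.mpr (by linarith)
  have hS2 : Real.sqrt (2*σ)^2 = 2*σ := Real.sq_sqrt (by linarith)
  have hSne : Real.sqrt (2*σ) ≠ 0 := ne_of_gt hS0
  have hπ : (0:ℝ) < Real.sqrt Real.pi := Real.sqrt_pos.mpr Real.pi_pos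
  have hsq : HasDerivAt (fun s : ℝ => Real.sqrt (2*s)) (1/(2*Real.sqrt (2*σ)) * 2) σ := by
    have hinner : HasDerivAt (fun s : ℝ => 2*s) 2 σ := by
      simpa using (hasDerivAt_id σ).const_mul 2
    exact (Real.hasDerivAt_sqrt (by positivity)).comp σ hinner
  have hu : HasDerivAt (fun s : ℝ => (Λ-s)/Real.sqrt (2*s))
      (-((σ+Λ)/(2*σ*Real.sqrt (2*σ)))) σ := by
    have hnum : HasDerivAt (fun s : ℝ => Λ - s) (-1) σ := by
      simpa using (hasDerivAt_id σ).const_sub Λ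
    have h := hnum.div hsq hSne
    refine h.congr_deriv ?_; symm
    set S := Real.sqrt (2*σ) with hSdef
    rw [hS2]
    field_simp
    linear_combination (1) * hS2
  have hv : HasDerivAt (fun s : ℝ => (Λ+s)/Real.sqrt (2*s))
      ((σ-Λ)/(2*σ*Real.sqrt (2*σ))) σ := by
    have hnum : HasDerivAt (fun s : ℝ => Λ + s) 1 σ := by
      simpa using (hasDerivAt_id σ).const_add Λ
    have h := hnum.div hsq hSne
    refine h.congr_deriv ?_; symm
    set S := Real.sqrt (2*σ) with hSdef
    rw [hS2]
    field_simp
    linear_combination (-1) * hS2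
  have hEu : HasDerivAt (fun s => erfc ((Λ-s)/Real.sqrt (2*s)))
      ((2/Real.sqrt Real.pi) * (-(Real.exp (-((Λ-σ)/Real.sqrt (2*σ))^2))
        * -((σ+Λ)/(2*σ*Real.sqrt (2*σ))))) σ := by
    exact ((Ei_hasDerivAt ((Λ-σ)/Real.sqrt (2*σ))).comp σ hu).const_mul (2/Real.sqrt Real.pi)
  have hEv : HasDerivAt (fun s => erfc ((Λ+s)/Real.sqrt (2*s)))
      ((2/Real.sqrt Real.pi) * (-(Real.exp (-((Λ+σ)/Real.sqrt (2*σ))^2))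
        * ((σ-Λ)/(2*σ*Real.sqrt (2*σ))))) σ := by
    exact ((Ei_hasDerivAt ((Λ+σ)/Real.sqrt (2*σ))).comp σ hv).const_mul (2/Real.sqrt Real.pi)
  have hfull := ((hEu.add (hEv.const_mul (Real.exp (2*Λ)))).const_mul (1/2 : ℝ)).const_sub 1
  have heq : (fun s => 1 - fpH s Λ)
      = fun s => 1 - 1/2 * (erfc ((Λ-s)/Real.sqrt (2*s))
          + Real.exp (2*Λ) * erfc ((Λ+s)/Real.sqrt (2*s))) := by
    funext s; rw [fpH]
  rw [heq]
  refine hfull.congr_deriv ?_; symm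
  have hexp1 : Real.exp (-((Λ-σ)/Real.sqrt (2*σ))^2)
      = Real.exp (-((σ-Λ)/Real.sqrt (2*σ))^2) := by
    congr 1; ring
  have hexp2 : Real.exp (2*Λ) * Real.exp (-((Λ+σ)/Real.sqrt (2*σ))^2)
      = Real.exp (-((σ-Λ)/Real.sqrt (2*σ))^2) := by
    rw [← Real.exp_add]
    congr 1
    rw [div_pow, div_pow, hS2]
    field_simp
    ring
  rw [hexp1]
  linear_combination (-((σ-Λ)/(Real.sqrt Real.pi*(2*σ*Real.sqrt (2*σ))))) * hexp2


section polyfacts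
variable {S a b σ Λ : ℝ}

lemma L_Sle (hS0 : 0 < S) (hS2 : S^2 = 2*σ) (h108 : 108 ≤ σ) : S ≤ σ/2 := by
  nlinarith

lemma L_a2 (ha2eq : a^2*(2*σ) = (σ-Λ)^2) (hΛ : 0 < Λ) (h2Λ : 2*Λ < σ) (h108 : 108 ≤ σ) :
    σ/8 ≤ a^2 := by nlinarith

lemma L_b2 (hb2eq : b^2*(2*σ) = (σ+Λ)^2) (hΛ : 0 < Λ) (h2Λ : 2*Λ < σ) (h108 : 108 ≤ σ) :
    σ/2 ≤ b^2 := by nlinarith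

lemma L_e2 (ha0 : 0 < a) (hab : a ≤ b) : 1*(4*a^3) ≤ 1*(4*b^3) := by
  nlinarith [pow_le_pow_left₀ ha0.le hab 3]

lemma L_e4 (hS0 : 0 < S) (hΛ : 0 < Λ) (h2Λ : 2*Λ < σ) :
    S*Λ*(3*σ^2) < 4*(S*Λ)*((σ-Λ)*(σ+Λ)) := by
  have h : 0 < σ^2 - 4*Λ^2 := by nlinarith
  nlinarith [mul_pos (mul_pos hS0 hΛ) h]

lemma L_e5 (hS0 : 0 < S) (hΛ : 0 < Λ) (hσ0 : 0 < σ) (hσΛ : 216 ≤ σ*Λ)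
    (ha0 : 0 < a) (ha2 : σ/8 ≤ a^2) (haS : σ/2 ≤ a*S) :
    3*(3*σ^2) ≤ 2*(S*Λ)*(8*a^5) := by
  have h6 : (σ/8)^2 ≤ (a^2)^2 := by nlinarith
  have h8 : (σ/8)^2*(σ/2) ≤ (a^2)^2*(a*S) :=
    mul_le_mul h6 haS (by positivity) (by positivity)
  have h9 := mul_le_mul_of_nonneg_left h8 hΛ.le
  have h10 := mul_le_mul_of_nonneg_right hσΛ (sq_nonneg σ)
  nlinarith [h9, h10]

lemma L_pbr (hΛ : 0 < Λ) (h2Λ : 2*Λ < σ) (h108 : 108 ≤ σ) :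
    3*σ*(3*σ^2+Λ^2) ≤ ((σ-Λ)*(σ+Λ))^2 := by
  have hA : 0 ≤ σ^2/4 - Λ^2 := by nlinarith
  nlinarith [mul_nonneg hA (sq_nonneg σ), mul_nonneg hA (mul_nonneg (by linarith : (0:ℝ) ≤ σ) (by linarith : (0:ℝ) ≤ σ)),
    mul_nonneg (by linarith : (0:ℝ) ≤ σ-108) (pow_nonneg (by linarith : (0:ℝ) ≤ σ) 3),
    sq_nonneg (Λ^2), sq_nonneg Λ]

lemma L_f2 (hS0 : 0 < S) (hΛ : 0 < Λ) (h2Λ : 2*Λ < σ) (h108 : 108 ≤ σ) :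
    2*σ*S*((σ+Λ)^3-(σ-Λ)^3)*(3*((σ-Λ)*(σ+Λ))) ≤ S*Λ*(4*((σ-Λ)^3*(σ+Λ)^3)) := by
  have hbr := L_pbr hΛ h2Λ h108
  have hP0 : 0 < σ - Λ := by linarith
  have hQ0 : 0 < σ + Λ := by linarith
  have key : 2*σ*((σ+Λ)^3-(σ-Λ)^3)*(3*((σ-Λ)*(σ+Λ))) ≤ Λ*(4*((σ-Λ)^3*(σ+Λ)^3)) := by
    nlinarith [mul_nonneg (mul_nonneg (by positivity : (0:ℝ) ≤ 4*Λ) (mul_pos hP0 hQ0).le)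
      (by linarith : (0:ℝ) ≤ ((σ-Λ)*(σ+Λ))^2 - 3*σ*(3*σ^2+Λ^2))]
  nlinarith [mul_le_mul_of_nonneg_left key hS0.le]

lemma L_f3 (hS0 : 0 < S) (hΛ : 0 < Λ) (hσ0 : 0 < σ) (hσΛ : 216 ≤ σ*Λ) (h2Λ : 2*Λ < σ)
    (hb0 : 0 < b) (hb2 : σ/2 ≤ b^2) (hbS : b*S = σ+Λ) :
    3*(3*((σ-Λ)*(σ+Λ))) ≤ S*Λ*(8*b^5) := by
  have hQ0 : 0 < σ + Λ := by linarith
  have h6 : (σ/2)^2 ≤ (b^2)^2 := by nlinarith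
  have h8 : (σ/2)^2*(σ+Λ) ≤ (b^2)^2*(b*S) := by
    rw [hbS]; exact mul_le_mul_of_nonneg_right h6 hQ0.le
  have h9 := mul_le_mul_of_nonneg_left h8 (by positivity : (0:ℝ) ≤ 8*Λ)
  have h10 : 0 ≤ (2*Λ*σ-9)*σ*(σ+Λ) := by
    apply mul_nonneg (mul_nonneg _ hσ0.le) hQ0.le
    nlinarith
  nlinarith [h9, h10]

end polyfacts

set_option maxHeartbeats 1000000 in
lemma key_bounds (Λ σ : ℝ) (hΛ : 0 < Λ) (hσ : 2*Λ + 108 + 216/Λ ≤ σ) :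
    0 < 1 - fpH σ Λ ∧
    1 - fpH σ Λ < 4*(2*Λ/Real.sqrt Real.pi * Real.exp (-((σ-Λ)/Real.sqrt (2*σ))^2)
      / (2*σ*Real.sqrt (2*σ))) := by
  have h216 : 0 < 216/Λ := by positivity
  have hσ108 : 108 ≤ σ := by linarith
  have hσ0 : 0 < σ := by linarith
  have h2Λ : 2*Λ < σ := by linarith
  have hσΛ : 216 ≤ σ*Λ := by
    have h1 : 216/Λ ≤ σ := by linarith
    rwa [div_le_iff₀ hΛ] at h1
  have hπ : (0:ℝ) < Real.sqrt Real.pi := Real.sqrt_pos.mpr Real.pi_pos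
  rw [G_eq Λ σ hσ0]
  set S := Real.sqrt (2*σ) with hSdef
  have hS0 : 0 < S := Real.sqrt_pos.mpr (by linarith)
  have hS2 : S^2 = 2*σ := Real.sq_sqrt (by linarith)
  have hSne : S ≠ 0 := ne_of_gt hS0
  set a := (σ-Λ)/S with hadef
  set b := (σ+Λ)/S with hbdef
  have hP0 : 0 < σ - Λ := by linarith
  have hQ0 : 0 < σ + Λ := by linarith
  have ha0 : 0 < a := div_pos hP0 hS0
  have hb0 : 0 < b := div_pos hQ0 hS0
  have hSle : S ≤ σ/2 := L_Sle hS0 hS2 hσ108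
  have ha1 : 1 ≤ a := by
    rw [hadef, le_div_iff₀ hS0]; linarith
  have hab : a ≤ b := by
    rw [hadef, hbdef, div_le_div_iff₀ hS0 hS0]
    exact mul_le_mul_of_nonneg_right (by linarith) hS0.le
  have hb1 : 1 ≤ b := le_trans ha1 hab
  have haS : a*S = σ-Λ := by rw [hadef]; field_simp
  have hbS : b*S = σ+Λ := by rw [hbdef]; field_simp
  have ha2eq : a^2 * (2*σ) = (σ-Λ)^2 := by
    rw [← hS2, ← mul_pow, haS]
  have hb2eq : b^2 * (2*σ) = (σ+Λ)^2 := by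
    rw [← hS2, ← mul_pow, hbS]
  have ha2 : σ/8 ≤ a^2 := L_a2 ha2eq hΛ h2Λ hσ108
  have hb2 : σ/2 ≤ b^2 := L_b2 hb2eq hΛ h2Λ hσ108
  have hdiff : b^2 - a^2 = 2*Λ := by
    have h2 : (2:ℝ)*σ ≠ 0 := by positivity
    apply mul_right_cancel₀ h2
    linear_combination hb2eq - ha2eq
  have hexp2 : Real.exp (2*Λ) * Real.exp (-b^2) = Real.exp (-a^2) := by
    rw [← Real.exp_add]; congr 1; linarith
  set E := Real.exp (-a^2) with hEdef
  have hE0 : 0 < E := Real.exp_pos _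
  have hEa_up := Ei_upper a ha1
  have hEa_lo := Ei_lower a ha1
  have hEb_up := Ei_upper b hb1
  have hEb_lo := Ei_lower b hb1
  rw [← hEdef] at hEa_up hEa_lo
  -- upper chain
  have hU1 : Ei a - Real.exp (2*Λ) * Ei b ≤ E*((4*a^4-2*a^2+3)/(8*a^5)) - E*((2*b^2-1)/(4*b^3)) := by
    have h1 : Real.exp (2*Λ) * (Real.exp (-b^2) * ((2*b^2-1)/(4*b^3)))
        ≤ Real.exp (2*Λ) * Ei b :=
      mul_le_mul_of_nonneg_left hEb_lo (Real.exp_pos _).le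
    rw [← mul_assoc, hexp2] at h1
    linarith
  have e2 : 0 ≤ 1/(4*a^3) - 1/(4*b^3) := by
    rw [sub_nonneg, div_le_div_iff₀ (by positivity) (by positivity)]
    exact L_e2 ha0 hab
  have e3 : 1/(2*a) - 1/(2*b) = S*Λ/((σ-Λ)*(σ+Λ)) := by
    rw [hadef, hbdef]; field_simp; ring
  have e4 : S*Λ/((σ-Λ)*(σ+Λ)) < 4*(S*Λ)/(3*σ^2) := by
    rw [div_lt_div_iff₀ (by positivity) (by positivity)]
    exact L_e4 hS0 hΛ h2Λ
  have e5 : 3/(8*a^5) ≤ 2*(S*Λ)/(3*σ^2) := by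
    rw [div_le_div_iff₀ (by positivity) (by positivity)]
    exact L_e5 hS0 hΛ hσ0 hσΛ ha0 ha2 (by rw [haS]; linarith)
  have e1 : (4*a^4-2*a^2+3)/(8*a^5) - (2*b^2-1)/(4*b^3)
      = (1/(2*a) - 1/(2*b)) - (1/(4*a^3) - 1/(4*b^3)) + 3/(8*a^5) := by
    field_simp; ring
  have e6 : 4*(S*Λ)/(3*σ^2) + 2*(S*Λ)/(3*σ^2) = 4*Λ/(σ*S) := by
    rw [← add_div, div_eq_div_iff (by positivity) (by positivity)]
    linear_combination (6*Λ*σ)*hS2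
  have hU2 : (4*a^4-2*a^2+3)/(8*a^5) - (2*b^2-1)/(4*b^3) < 4*Λ/(σ*S) := by
    rw [e1, ← e6]; linarith [e3, e4, e5, e2]
  have hU3 : Ei a - Real.exp (2*Λ) * Ei b < E * (4*Λ/(σ*S)) := by
    have h9 : E*((4*a^4-2*a^2+3)/(8*a^5)) - E*((2*b^2-1)/(4*b^3))
        = E*((4*a^4-2*a^2+3)/(8*a^5) - (2*b^2-1)/(4*b^3)) := by ring
    have h10 := mul_lt_mul_of_pos_left hU2 hE0
    linarith
  -- lower chain
  have hL1 : E*((2*a^2-1)/(4*a^3)) - E*((4*b^4-2*b^2+3)/(8*b^5))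
      ≤ Ei a - Real.exp (2*Λ) * Ei b := by
    have h1 : Real.exp (2*Λ) * Ei b
        ≤ Real.exp (2*Λ) * (Real.exp (-b^2) * ((4*b^4-2*b^2+3)/(8*b^5))) :=
      mul_le_mul_of_nonneg_left hEb_up (Real.exp_pos _).le
    rw [← mul_assoc, hexp2] at h1
    linarith
  have f1 : (2*a^2-1)/(4*a^3) - (4*b^4-2*b^2+3)/(8*b^5)
      = S*Λ/((σ-Λ)*(σ+Λ)) - (1/(4*a^3) - 1/(4*b^3)) - 3/(8*b^5) := by
    rw [← e3]; field_simp; ring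
  have g1 : 1/(4*a^3) - 1/(4*b^3)
      = S^3*((σ+Λ)^3-(σ-Λ)^3)/(4*((σ-Λ)^3*(σ+Λ)^3)) := by
    rw [hadef, hbdef]; field_simp
  have hS3 : S^3 = 2*σ*S := by
    have h : S^3 = S^2*S := by ring
    rw [h, hS2]
  have f2 : 1/(4*a^3) - 1/(4*b^3) ≤ S*Λ/(3*((σ-Λ)*(σ+Λ))) := by
    rw [g1, div_le_div_iff₀ (by positivity) (by positivity), hS3]
    exact L_f2 hS0 hΛ h2Λ hσ108
  have f3 : 3/(8*b^5) ≤ S*Λ/(3*((σ-Λ)*(σ+Λ))) := by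
    rw [div_le_div_iff₀ (by positivity) (by positivity)]
    exact L_f3 hS0 hΛ hσ0 hσΛ h2Λ hb0 hb2 hbS
  have f4 : 0 < S*Λ/((σ-Λ)*(σ+Λ)) := by positivity
  have f5 : S*Λ/(3*((σ-Λ)*(σ+Λ))) = (1/3)*(S*Λ/((σ-Λ)*(σ+Λ))) := by
    field_simp
  have hL2 : 0 < (2*a^2-1)/(4*a^3) - (4*b^4-2*b^2+3)/(8*b^5) := by
    rw [f1]
    rw [f5] at f2 f3
    linarith
  have hL3 : 0 < Ei a - Real.exp (2*Λ) * Ei b := by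
    have h9 : E*((2*a^2-1)/(4*a^3)) - E*((4*b^4-2*b^2+3)/(8*b^5))
        = E*((2*a^2-1)/(4*a^3) - (4*b^4-2*b^2+3)/(8*b^5)) := by ring
    have h10 := mul_pos hE0 hL2
    linarith
  constructor
  · exact div_pos hL3 hπ
  · have hrhs : 4*(2*Λ/Real.sqrt Real.pi * E / (2*σ*S)) = (E * (4*Λ/(σ*S)))/Real.sqrt Real.pi := by
      field_simp
    rw [hrhs]
    exact (div_lt_div_iff_of_pos_right hπ).mpr hU3


theorem hazard_rate_eventually_above_quarter (Λ : ℝ) (hΛ : 0 < Λ) :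
    ∃ σs : ℝ, (-3 + Real.sqrt (9 + 4*Λ^2))/2 ≤ σs ∧
      (∀ σ : ℝ, σs < σ → 1/4 < -(deriv (fun s => Real.log (1 - fpH s Λ)) σ)) ∧
      (∀ σ : ℝ, σs < σ →
        (1 - fpH σ Λ) / (1 - fpH σs Λ) ≤ Real.exp (-(σ - σs)/4)) := by
  set σs := 2*Λ + 108 + 216/Λ with hσsdef
  have h216 : 0 < 216/Λ := by positivity
  have hlog : ∀ σ : ℝ, σs ≤ σ →
      0 < 1 - fpH σ Λ ∧
      HasDerivAt (fun s => Real.log (1 - fpH s Λ))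
        (-(2*Λ/Real.sqrt Real.pi * Real.exp (-((σ-Λ)/Real.sqrt (2*σ))^2)
          / (2*σ*Real.sqrt (2*σ))) / (1 - fpH σ Λ)) σ ∧
      1 - fpH σ Λ < 4*(2*Λ/Real.sqrt Real.pi * Real.exp (-((σ-Λ)/Real.sqrt (2*σ))^2)
          / (2*σ*Real.sqrt (2*σ))) := by
    intro σ hle
    have hσ0 : 0 < σ := by
      rw [hσsdef] at hle; linarith
    obtain ⟨hGpos, hGlt⟩ := key_bounds Λ σ hΛ (by rw [hσsdef] at hle; linarith)
    exact ⟨hGpos, (G_hasDerivAt Λ σ hσ0).log (ne_of_gt hGpos), hGlt⟩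
  have hquarter : ∀ σ : ℝ, σs ≤ σ →
      -(2*Λ/Real.sqrt Real.pi * Real.exp (-((σ-Λ)/Real.sqrt (2*σ))^2)
          / (2*σ*Real.sqrt (2*σ))) / (1 - fpH σ Λ) + 1/4 < 0 := by
    intro σ hle
    obtain ⟨hGpos, _, hGlt⟩ := hlog σ hle
    rw [neg_div, neg_add_lt_iff_lt_add, add_zero, lt_div_iff₀ hGpos]
    linarith
  refine ⟨σs, ?_, ?_, ?_⟩
  · have h1 : Real.sqrt (9 + 4*Λ^2) ≤ 3 + 2*Λ := by
      have h2 : Real.sqrt (9 + 4*Λ^2) ≤ Real.sqrt ((3+2*Λ)^2) :=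
        Real.sqrt_le_sqrt (by nlinarith)
      rwa [Real.sqrt_sq (by positivity)] at h2
    rw [hσsdef]
    linarith
  · intro σ hσ
    obtain ⟨hGpos, hDeriv, hGlt⟩ := hlog σ hσ.le
    rw [hDeriv.deriv]
    have hq := hquarter σ hσ.le
    set D := -(2*Λ/Real.sqrt Real.pi * Real.exp (-((σ-Λ)/Real.sqrt (2*σ))^2)
          / (2*σ*Real.sqrt (2*σ)))
    linarith
  · intro σ hσ
    -- the function F s = log (1 - fpH s Λ) + s/4 is strictly decreasing on [σs, ∞)
    set F := fun s : ℝ => Real.log (1 - fpH s Λ) + s/4 with hFdef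
    have hFderiv : ∀ x ∈ Set.Ici σs, HasDerivAt F
        (-(2*Λ/Real.sqrt Real.pi * Real.exp (-((x-Λ)/Real.sqrt (2*x))^2)
          / (2*x*Real.sqrt (2*x))) / (1 - fpH x Λ) + 1/4) x := by
      intro x hx
      obtain ⟨_, hD, _⟩ := hlog x hx
      exact hD.add ((hasDerivAt_id x).div_const 4)
    have hcont : ContinuousOn F (Set.Ici σs) := fun x hx =>
      (hFderiv x hx).continuousAt.continuousWithinAt
    have hanti : StrictAntiOn F (Set.Ici σs) := by
      apply strictAntiOn_of_deriv_neg (convex_Ici σs) hcont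
      intro x hx
      rw [interior_Ici] at hx
      rw [(hFderiv x (Set.mem_Ici.mpr (le_of_lt hx))).deriv]
      exact hquarter x (le_of_lt hx)
    have hFlt : F σ < F σs :=
      hanti (Set.self_mem_Ici) (Set.mem_Ici.mpr hσ.le) hσ
    obtain ⟨hGposσ, _, _⟩ := hlog σ hσ.le
    obtain ⟨hGposσs, _, _⟩ := hlog σs le_rfl
    have h1 : (1 - fpH σ Λ) / (1 - fpH σs Λ)
        = Real.exp (Real.log (1 - fpH σ Λ) - Real.log (1 - fpH σs Λ)) := by
      rw [Real.exp_sub, Real.exp_log hGposσ, Real.exp_log hGposσs]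
    rw [h1]
    apply Real.exp_le_exp.mpr
    rw [hFdef] at hFlt
    simp only at hFlt
    linarith
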